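/- Fix a positive integer K, a positive integer m, real snr > 0, distances d_{k,ℓ} > 0 and path-loss exponents β_{k,ℓ} > 0, a scheduling action a ∈ {0,1}^K, and an index k ∈ {1,…,K}. Let G_k have the Gamma distribution with shape m and rate m and let E_{k,ℓ}, ℓ ≠ k, have exponential distribution of rate 1, all mutually independent. Then the ergodic spectral efficiency of link k, R_k(a) := E[log₂(1 + G_k d_{k,k}^{−β_{k,k}} a_k / (Σ_{ℓ≠k} E_{k,ℓ} d_{k,ℓ}^{−β_{k,ℓ}} a_ℓ + 1/snr))], equals log₂(e) · a_k · ∫_0^∞ (e^{−z/snr}/z) · (1 − (1 + z d_{k,k}^{−β_{k,k}}/m)^{−m}) · ∏_{ℓ≠k} (1 + z d_{k,ℓ}^{−β_{k,ℓ}})^{−a_ℓ} dz. -/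

import Mathlib

open MeasureTheory ProbabilityTheory Set Finset

lemma my_integral_exp_neg_mul_Ioi {t : ℝ} (ht : 0 < t) :
    ∫ z in Ioi (0:ℝ), Real.exp (-(t * z)) = 1 / t := by
  have h := Real.integral_rpow_mul_exp_neg_mul_Ioi (by norm_num : (0:ℝ) < 1) ht
  simpa [Real.Gamma_one] using h

lemma frullani_aux {p q : ℝ} (hp : 0 < p) (hpq : p ≤ q) :
    IntegrableOn (fun z => (Real.exp (-(p * z)) - Real.exp (-(q * z))) / z) (Ioi (0:ℝ)) ∧
      ∫ z in Ioi (0:ℝ), (Real.exp (-(p * z)) - Real.exp (-(q * z))) / z = Real.log (q / p) := by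
  set μ := volume.restrict (Ioi (0:ℝ)) with hμ
  set ν := volume.restrict (Ioc p q) with hν
  have hcont : Continuous (fun w : ℝ × ℝ => Real.exp (-(w.2 * w.1))) := by continuity
  have key : ∀ z : ℝ, z ≠ 0 →
      (∫ t in Ioc p q, Real.exp (-(t * z))) = (Real.exp (-(p * z)) - Real.exp (-(q * z))) / z := by
    intro z hz
    rw [← intervalIntegral.integral_of_le hpq]
    have h1 : ∀ t : ℝ, Real.exp (-(t * z)) = Real.exp ((-z) * t) := fun t => by ring_nf
    simp_rw [h1]
    rw [intervalIntegral.integral_comp_mul_left Real.exp (neg_ne_zero.mpr hz),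
      integral_exp, smul_eq_mul,
      show Real.exp (-z*q) = Real.exp (-(q*z)) by ring_nf,
      show Real.exp (-z*p) = Real.exp (-(p*z)) by ring_nf,
      inv_neg, eq_div_iff hz]
    ring_nf
    rw [mul_inv_cancel₀ hz]
    ring
  have hmeasf : AEStronglyMeasurable (fun w : ℝ × ℝ => Real.exp (-(w.2 * w.1))) (μ.prod ν) :=
    hcont.aestronglyMeasurable
  have hint : Integrable (fun w : ℝ × ℝ => Real.exp (-(w.2 * w.1))) (μ.prod ν) := by
    rw [integrable_prod_iff hmeasf]
    constructor
    · refine ae_of_all _ fun z => ?_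
      exact ((Continuous.integrableOn_Ioc (by continuity)))
    · have hb : ∀ᵐ z ∂μ, ‖∫ t, ‖Real.exp (-(t * z))‖ ∂ν‖ ≤ (q - p) * Real.exp (-(p * z)) := by
        refine Filter.eventually_of_mem (self_mem_ae_restrict measurableSet_Ioi) fun z hz => ?_
        have hz0 : (0:ℝ) ≤ z := le_of_lt hz
        have hC : ∀ t ∈ Ioc p q, ‖‖Real.exp (-(t * z))‖‖ ≤ Real.exp (-(p * z)) := by
          intro t ht
          rw [Real.norm_eq_abs, Real.norm_eq_abs, abs_abs, Real.abs_exp]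
          exact Real.exp_le_exp.mpr (by nlinarith [ht.1.le])
        have hfin : volume (Ioc p q) < ⊤ := by
          rw [Real.volume_Ioc]; exact ENNReal.ofReal_lt_top
        calc ‖∫ t, ‖Real.exp (-(t * z))‖ ∂ν‖
            ≤ Real.exp (-(p*z)) * (volume (Ioc p q)).toReal :=
              norm_setIntegral_le_of_norm_le_const hfin hC
          _ = (q - p) * Real.exp (-(p * z)) := by
              rw [Real.volume_Ioc, ENNReal.toReal_ofReal (by linarith)]; ring
      refine Integrable.mono' (g := fun z => (q - p) * Real.exp (-(p * z)))
        ?_ (hmeasf.norm.integral_prod_right') hb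
      have := (exp_neg_integrableOn_Ioi 0 hp).const_mul (q - p)
      simpa [neg_mul] using this
  constructor
  · refine (hint.integral_prod_left).congr ?_
    refine Filter.eventuallyEq_of_mem (self_mem_ae_restrict measurableSet_Ioi) fun z hz => ?_
    exact key z (ne_of_gt hz)
  · have swap := integral_integral_swap (f := fun z t => Real.exp (-(t * z))) (μ := μ) (ν := ν) hint
    have lhs : (∫ z, ∫ t, Real.exp (-(t * z)) ∂ν ∂μ)
        = ∫ z in Ioi (0:ℝ), (Real.exp (-(p * z)) - Real.exp (-(q * z))) / z := by
      refine setIntegral_congr_fun measurableSet_Ioi fun z hz => ?_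
      exact key z (ne_of_gt hz)
    have rhs : (∫ t, ∫ z, Real.exp (-(t * z)) ∂μ ∂ν) = Real.log (q / p) := by
      have h2 : (∫ t, ∫ z, Real.exp (-(t * z)) ∂μ ∂ν) = ∫ t in Ioc p q, 1 / t := by
        refine setIntegral_congr_fun measurableSet_Ioc fun t ht => ?_
        exact my_integral_exp_neg_mul_Ioi (lt_of_lt_of_le hp ht.1.le)
      rw [h2, ← intervalIntegral.integral_of_le hpq, integral_one_div]
      rw [Set.uIcc_of_le hpq]
      intro h0
      exact absurd h0.1 (not_le.mpr hp)
    rw [← lhs, swap, rhs]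

lemma frullani_lintegral {p q : ℝ} (hp : 0 < p) (hpq : p ≤ q) :
    ∫⁻ z in Ioi (0:ℝ), ENNReal.ofReal ((Real.exp (-(p * z)) - Real.exp (-(q * z))) / z)
      = ENNReal.ofReal (Real.log (q / p)) := by
  obtain ⟨hint, hval⟩ := frullani_aux hp hpq
  rw [← hval, ofReal_integral_eq_lintegral_ofReal hint ?_]
  refine Filter.eventually_of_mem (self_mem_ae_restrict measurableSet_Ioi) fun z hz => ?_
  have : Real.exp (-(q * z)) ≤ Real.exp (-(p * z)) :=
    Real.exp_le_exp.mpr (by nlinarith [le_of_lt (show (0:ℝ) < z from hz)])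
  exact div_nonneg (by linarith) (le_of_lt hz)
open scoped ENNReal NNReal

lemma my_integral_exp_gammaMeasure {a r t : ℝ} (ha : 0 < a) (hr : 0 < r) (ht : 0 ≤ t) :
    ∫ x, Real.exp (-(t * max x 0)) ∂(gammaMeasure a r) = (r / (r + t)) ^ a := by
  have hrt : 0 < r + t := by linarith
  have hFmeas : Measurable fun x => Real.toNNReal (gammaPDFReal a r x) :=
    (measurable_gammaPDFReal a r).real_toNNReal
  have h1 : ∫ x, Real.exp (-(t * max x 0)) ∂(gammaMeasure a r)
      = ∫ x, gammaPDFReal a r x * Real.exp (-(t * max x 0)) := by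
    rw [gammaMeasure,
      show (gammaPDF a r) = fun x => ((Real.toNNReal (gammaPDFReal a r x) : ℝ≥0) : ℝ≥0∞) from rfl,
      integral_withDensity_eq_integral_smul hFmeas]
    refine integral_congr_ae (ae_of_all _ fun x => ?_)
    simp [NNReal.smul_def, Real.coe_toNNReal _ (gammaPDFReal_nonneg ha hr x)]
  have h2 : ∫ x, gammaPDFReal a r x * Real.exp (-(t * max x 0))
      = ∫ x in Ioi (0:ℝ), r ^ a / Real.Gamma a * (x ^ (a - 1) * Real.exp (-((r + t) * x))) := by
    rw [← setIntegral_eq_integral_of_forall_compl_eq_zero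
      (s := Ici (0:ℝ)) (fun x hx => by
        have : x < 0 := by simpa using hx
        simp [gammaPDFReal, not_le.mpr this]),
      integral_Ici_eq_integral_Ioi]
    refine setIntegral_congr_fun measurableSet_Ioi fun x hx => ?_
    have hx0 : (0:ℝ) ≤ x := le_of_lt hx
    rw [gammaPDFReal, if_pos hx0, max_eq_left hx0]
    rw [mul_assoc, mul_assoc, ← Real.exp_add]
    ring_nf
  rw [h1, h2, integral_const_mul, Real.integral_rpow_mul_exp_neg_mul_Ioi ha hrt]
  have hΓ : Real.Gamma a ≠ 0 := (Real.Gamma_pos_of_pos ha).ne'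
  rw [show r ^ a / Real.Gamma a * ((1 / (r + t)) ^ a * Real.Gamma a)
      = r ^ a * (1 / (r + t)) ^ a by field_simp,
    ← Real.mul_rpow hr.le (by positivity), mul_one_div]

lemma my_ae_nonneg_of_map_gamma {Ω : Type*} [MeasureSpace Ω] {X : Ω → ℝ} (hX : Measurable X)
    {a r : ℝ} (h : Measure.map X ℙ = gammaMeasure a r) : ∀ᵐ ω, 0 ≤ X ω := by
  have h0 : ℙ (X ⁻¹' (Iio 0)) = 0 := by
    rw [← Measure.map_apply hX measurableSet_Iio, h, gammaMeasure,
      withDensity_apply _ measurableSet_Iio, lintegral_gammaPDF_of_nonpos le_rfl]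
  rw [ae_iff]
  convert h0 using 2
  ext ω; simp [not_le]

lemma my_integral_prod_of_iIndep {Ω : Type*} [MeasureSpace Ω]
    [IsProbabilityMeasure (ℙ : Measure Ω)]
    {K : ℕ} (X : Fin K → Ω → ℝ) (hX : ∀ l, Measurable (X l))
    (hindep : iIndepFun X ℙ)
    (f : Fin K → ℝ → ℝ) (hf : ∀ l, Measurable (f l))
    (h0 : ∀ l x, 0 ≤ f l x) (h1 : ∀ l x, f l x ≤ 1) (s : Finset (Fin K)) :
    ∫ ω, ∏ l ∈ s, f l (X l ω) = ∏ l ∈ s, ∫ ω, f l (X l ω) := by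
  have hY : ∀ l, Measurable fun ω => f l (X l ω) := fun l => (hf l).comp (hX l)
  have hYint : ∀ l, Integrable (fun ω => f l (X l ω)) ℙ := fun l => by
    refine Integrable.mono' (integrable_const (1:ℝ)) (hY l).aestronglyMeasurable
      (ae_of_all _ fun ω => ?_)
    rw [Real.norm_eq_abs, abs_of_nonneg (h0 l _)]; exact h1 l _
  have hcomp : iIndepFun (fun l => f l ∘ X l) ℙ :=
    hindep.comp f hf
  induction s using Finset.induction_on with
  | empty => simp
  | insert i s hi ih =>
    have hIndep : IndepFun (∏ j ∈ s, (f j ∘ X j)) (f i ∘ X i) ℙ :=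
      hcomp.indepFun_finsetProd_of_notMem hY hi
    have hprodint' : Integrable (fun ω => ∏ l ∈ s, f l (X l ω)) ℙ := by
      refine Integrable.mono' (integrable_const (1:ℝ))
        (Finset.measurable_prod s fun l _ => hY l).aestronglyMeasurable
        (ae_of_all _ fun ω => ?_)
      rw [Real.norm_eq_abs, abs_of_nonneg (Finset.prod_nonneg fun l _ => h0 l _)]
      exact Finset.prod_le_one (fun l _ => h0 l _) fun l _ => h1 l _
    have hprodeq : (∏ j ∈ s, (f j ∘ X j)) = fun ω => ∏ l ∈ s, f l (X l ω) := by
      funext ω; simp [Finset.prod_apply]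
    have hprodint : Integrable (∏ j ∈ s, (f j ∘ X j)) ℙ := hprodeq ▸ hprodint'
    have hmul := hIndep.symm.integral_mul_eq_mul_integral (hYint i).aestronglyMeasurable
      hprodint.aestronglyMeasurable
    calc ∫ ω, ∏ l ∈ insert i s, f l (X l ω)
        = ∫ ω, f i (X i ω) * ∏ l ∈ s, f l (X l ω) := by
          simp_rw [Finset.prod_insert hi]
      _ = (∫ ω, f i (X i ω)) * ∫ ω, ∏ l ∈ s, f l (X l ω) := by
          have := hmul
          rw [hprodeq] at this
          simpa [Pi.mul_apply] using this
      _ = ∏ l ∈ insert i s, ∫ ω, f l (X l ω) := by simp [Finset.prod_insert hi, ih]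
/-- Per-link identity in the proof of Theorem 1 (Appendix A): with Gamma(m, m) desired
fading power `G`, unit-rate exponential interfering fading powers `E ℓ` (`ℓ ≠ k`), all
mutually independent, the ergodic spectral efficiency of link `k` under scheduling action
`a ∈ {0,1}^K` equals
`log₂(e) · a_k ∫_0^∞ (e^{−z/snr}/z)(1 − (1 + z d_{kk}^{−β_{kk}}/m)^{−m})
  ∏_{ℓ≠k} (1 + z d_{kℓ}^{−β_{kℓ}})^{−a_ℓ} dz`. -/
theorem stmt_3 {Ω : Type*} [MeasureSpace Ω] [IsProbabilityMeasure (ℙ : Measure Ω)]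
    (K : ℕ) (hK : 0 < K) (m : ℕ) (hm : 0 < m) (snr : ℝ) (hsnr : 0 < snr)
    (d β : Fin K → Fin K → ℝ) (hd : ∀ k l, 0 < d k l) (hβ : ∀ k l, 0 < β k l)
    (a : Fin K → ℝ) (ha : ∀ k, a k = 0 ∨ a k = 1) (k : Fin K)
    (G : Ω → ℝ) (E : Fin K → Ω → ℝ)
    (hGmeas : Measurable G) (hEmeas : ∀ l, Measurable (E l))
    (hG : Measure.map G ℙ = gammaMeasure m m)
    (hE : ∀ l, l ≠ k → Measure.map (E l) ℙ = expMeasure 1)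
    (hindep : iIndepFun (Function.update E k G) ℙ) :
    (∫ ω, Real.logb 2 (1 + G ω * d k k ^ (-β k k) * a k /
        (∑ l ∈ univ.erase k, E l ω * d k l ^ (-β k l) * a l + 1 / snr))) =
      Real.logb 2 (Real.exp 1) * a k *
        ∫ z in Ioi (0 : ℝ), Real.exp (-z / snr) / z *
          ((1 - (1 + z * d k k ^ (-β k k) / m) ^ (-(m : ℝ))) *
            ∏ l ∈ univ.erase k, (1 + z * d k l ^ (-β k l)) ^ (-a l)) := by
  rcases ha k with hak | hak
  · simp [hak]
  rw [hak]
  have hcpos : ∀ l, (0:ℝ) < d k l ^ (-β k l) := fun l => Real.rpow_pos_of_pos (hd k l) _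
  have halnn : ∀ l, 0 ≤ a l := fun l => by rcases ha l with h | h <;> simp [h]
  have hρ : (0:ℝ) < 1 / snr := by positivity
  set T : ℝ → ℝ := fun z => Real.exp (-z / snr) / z *
      ((1 - (1 + z * d k k ^ (-β k k) / m) ^ (-(m : ℝ))) *
        ∏ l ∈ univ.erase k, (1 + z * d k l ^ (-β k l)) ^ (-a l)) with hTdef
  set X : Fin K → Ω → ℝ := Function.update E k G with hXdef
  set P : Ω → ℝ := fun ω => 1/snr + ∑ l ∈ univ.erase k, a l * d k l ^ (-β k l) * E l ω
    with hPdef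
  set Q : Ω → ℝ := fun ω => P ω + d k k ^ (-β k k) * G ω with hQdef
  have hPm : Measurable P :=
    measurable_const.add (Finset.measurable_sum _ fun l _ => (hEmeas l).const_mul _)
  have hQm : Measurable Q := hPm.add (hGmeas.const_mul _)
  have hXm : ∀ l, Measurable (X l) := by
    intro l
    rw [hXdef, Function.update_apply]
    split_ifs with h
    · exact hGmeas
    · exact hEmeas l
  have hGnn : ∀ᵐ ω, 0 ≤ G ω := my_ae_nonneg_of_map_gamma hGmeas hG
  have hEnn : ∀ᵐ ω, ∀ l ∈ univ.erase k, 0 ≤ E l ω := by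
    rw [Filter.eventually_all_finset]
    intro l hl
    exact my_ae_nonneg_of_map_gamma (hEmeas l)
      ((hE l (Finset.ne_of_mem_erase hl)).trans rfl)
  have hPQ : ∀ᵐ ω, 0 < P ω ∧ P ω ≤ Q ω := by
    filter_upwards [hGnn, hEnn] with ω h1 h2
    have hsum : 0 ≤ ∑ l ∈ univ.erase k, a l * d k l ^ (-β k l) * E l ω :=
      Finset.sum_nonneg fun l hl => by
        have h3 := h2 l hl
        have h4 := halnn l
        have h5 := (hcpos l).le
        positivity
    constructor
    · rw [hPdef]; dsimp only; linarith
    · rw [hQdef]; dsimp only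
      nlinarith [(hcpos k).le, h1]
  have hkermeas : Measurable (fun w : Ω × ℝ =>
      ENNReal.ofReal ((Real.exp (-(P w.1 * w.2)) - Real.exp (-(Q w.1 * w.2))) / w.2)) := by
    apply Measurable.ennreal_ofReal
    exact ((((hPm.comp measurable_fst).mul measurable_snd).neg.exp).sub
      (((hQm.comp measurable_fst).mul measurable_snd).neg.exp)).div measurable_snd
  -- the per-z computation
  have keyz : ∀ z : ℝ, 0 < z →
      (∫⁻ ω, ENNReal.ofReal ((Real.exp (-(P ω * z)) - Real.exp (-(Q ω * z))) / z))
        = ENNReal.ofReal (T z) := by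
    intro z hz
    set t : Fin K → ℝ := fun l => z * d k l ^ (-β k l) * (if l = k then 1 else a l) with htdef
    have htnn : ∀ l, 0 ≤ t l := fun l => by
      rw [htdef]; dsimp only
      split_ifs
      · exact mul_nonneg (mul_nonneg hz.le (hcpos l).le) zero_le_one
      · exact mul_nonneg (mul_nonneg hz.le (hcpos l).le) (halnn l)
    set f : Fin K → ℝ → ℝ := fun l x => Real.exp (-(t l * max x 0)) with hfdef
    have hfm : ∀ l, Measurable (f l) :=
      fun l => (((measurable_id.max measurable_const).const_mul (t l)).neg).exp
    have hf0 : ∀ l x, 0 ≤ f l x := fun l x => (Real.exp_pos _).le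
    have hf1 : ∀ l x, f l x ≤ 1 := fun l x => by
      rw [hfdef]; dsimp only
      rw [Real.exp_le_one_iff]
      have h4 : (0:ℝ) ≤ max x 0 := le_max_right _ _
      have h5 := htnn l
      nlinarith
    have hmarg : ∀ l, (∫ ω, f l (X l ω)) =
        if l = k then ((m:ℝ)/((m:ℝ) + t k))^(m:ℝ) else (1 + t l)⁻¹ := by
      intro l
      by_cases hlk : l = k
      · rw [hlk, if_pos rfl]
        have hXk : X k = G := by rw [hXdef]; exact Function.update_self k G E
        rw [hXk]
        have h1 : ∫ ω, f k (G ω) ∂ℙ = ∫ x, f k x ∂(Measure.map G ℙ) :=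
          (integral_map hGmeas.aemeasurable (hfm k).aestronglyMeasurable).symm
        rw [h1, hG]
        exact my_integral_exp_gammaMeasure (a := (m:ℝ)) (r := (m:ℝ))
          (Nat.cast_pos.mpr hm) (Nat.cast_pos.mpr hm) (htnn k)
      · rw [if_neg hlk]
        have hXl : X l = E l := by rw [hXdef]; exact Function.update_of_ne hlk G E
        rw [hXl]
        have h1 : ∫ ω, f l (E l ω) ∂ℙ = ∫ x, f l x ∂(Measure.map (E l) ℙ) :=
          (integral_map (hEmeas l).aemeasurable (hfm l).aestronglyMeasurable).symm
        rw [h1, hE l hlk, show (expMeasure 1 : Measure ℝ) = gammaMeasure 1 1 from rfl,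
          my_integral_exp_gammaMeasure (a := (1:ℝ)) (r := (1:ℝ)) one_pos one_pos (htnn l),
          Real.rpow_one, one_div]
    have hA : ∏ l ∈ univ.erase k, (1 + t l)⁻¹
        = ∏ l ∈ univ.erase k, (1 + z * d k l ^ (-β k l)) ^ (-a l) := by
      refine Finset.prod_congr rfl fun l hl => ?_
      have hlk := Finset.ne_of_mem_erase hl
      rw [htdef]; dsimp only
      rw [if_neg hlk]
      rcases ha l with h | h
      · rw [h]; simp
      · rw [h, mul_one, Real.rpow_neg_one]
    have hγ : ((m:ℝ)/((m:ℝ) + t k))^(m:ℝ)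
        = (1 + z * d k k ^ (-β k k) / m) ^ (-(m:ℝ)) := by
      have hm' : (0:ℝ) < m := Nat.cast_pos.mpr hm
      have hck := (hcpos k).le
      have hdiv : (0:ℝ) ≤ ((m:ℝ) + z * d k k ^ (-β k k)) / m := by positivity
      rw [htdef]; dsimp only
      rw [if_pos rfl, mul_one,
        show (1:ℝ) + z * d k k ^ (-β k k) / m = ((m:ℝ) + z * d k k ^ (-β k k)) / m from by
          field_simp,
        Real.rpow_neg hdiv, ← Real.inv_rpow hdiv, inv_div]
    -- a.e. rewriting of the Frullani integrand in product form
    have hae : ∀ᵐ ω, (Real.exp (-(P ω * z)) - Real.exp (-(Q ω * z))) / z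
        = Real.exp (-(1/snr*z)) / z *
          ((∏ l ∈ univ.erase k, f l (X l ω)) - ∏ l ∈ univ, f l (X l ω)) := by
      filter_upwards [hGnn, hEnn] with ω h1 h2
      have hfE : ∀ l ∈ univ.erase k, f l (X l ω) = Real.exp (-(t l * E l ω)) := by
        intro l hl
        have hXl : X l = E l := by
          rw [hXdef]; exact Function.update_of_ne (Finset.ne_of_mem_erase hl) G E
        rw [hXl, hfdef]; dsimp only
        rw [max_eq_left (h2 l hl)]
      have hsum : ∑ l ∈ univ.erase k, -(t l * E l ω)
          = -((∑ l ∈ univ.erase k, a l * d k l ^ (-β k l) * E l ω) * z) := by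
        rw [Finset.sum_mul, ← Finset.sum_neg_distrib]
        refine Finset.sum_congr rfl fun l hl => ?_
        rw [htdef]; dsimp only
        rw [if_neg (Finset.ne_of_mem_erase hl)]
        ring
      have e1 : Real.exp (-(1/snr*z)) * ∏ l ∈ univ.erase k, f l (X l ω)
          = Real.exp (-(P ω * z)) := by
        rw [Finset.prod_congr rfl hfE, ← Real.exp_sum, ← Real.exp_add, hsum, hPdef]
        dsimp only
        congr 1
        ring
      have hfk : f k (X k ω) = Real.exp (-(t k * G ω)) := by
        have hXk : X k = G := by rw [hXdef]; exact Function.update_self k G E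
        rw [hXk, hfdef]; dsimp only
        rw [max_eq_left h1]
      have e2 : Real.exp (-(1/snr*z)) * ∏ l ∈ univ, f l (X l ω)
          = Real.exp (-(Q ω * z)) := by
        rw [← Finset.mul_prod_erase univ _ (Finset.mem_univ k), hfk,
          show Real.exp (-(1/snr*z)) *
              (Real.exp (-(t k * G ω)) * ∏ l ∈ univ.erase k, f l (X l ω))
            = Real.exp (-(t k * G ω)) *
              (Real.exp (-(1/snr*z)) * ∏ l ∈ univ.erase k, f l (X l ω)) from by ring,
          e1, ← Real.exp_add, hQdef]
        dsimp only
        congr 1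
        rw [htdef]; dsimp only
        rw [if_pos rfl]
        ring
      rw [← e1, ← e2]
      ring
    have hintp : ∀ s : Finset (Fin K), Integrable (fun ω => ∏ l ∈ s, f l (X l ω)) ℙ := by
      intro s
      refine Integrable.mono' (integrable_const (1:ℝ))
        (Finset.measurable_prod s fun l _ => (hfm l).comp (hXm l)).aestronglyMeasurable
        (ae_of_all _ fun ω => ?_)
      rw [Real.norm_eq_abs, abs_of_nonneg (Finset.prod_nonneg fun l _ => hf0 l _)]
      exact Finset.prod_le_one (fun l _ => hf0 l _) fun l _ => hf1 l _
    have hB : ∫ ω, (Real.exp (-(P ω * z)) - Real.exp (-(Q ω * z))) / z = T z := by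
      rw [integral_congr_ae hae, integral_const_mul,
        integral_sub (hintp (univ.erase k)) (hintp univ),
        my_integral_prod_of_iIndep X hXm hindep f hfm hf0 hf1 (univ.erase k),
        my_integral_prod_of_iIndep X hXm hindep f hfm hf0 hf1 univ,
        ← Finset.mul_prod_erase univ _ (Finset.mem_univ k), hmarg k, if_pos rfl, hγ,
        show (∏ l ∈ univ.erase k, ∫ ω, f l (X l ω)) = ∏ l ∈ univ.erase k, (1 + t l)⁻¹ from
          Finset.prod_congr rfl fun l hl => by
            rw [hmarg l, if_neg (Finset.ne_of_mem_erase hl)],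
        hA, hTdef]
      dsimp only
      rw [show Real.exp (-z/snr) = Real.exp (-(1/snr*z)) from by congr 1; ring]
      ring
    have hnn : 0 ≤ᵐ[ℙ] fun ω => (Real.exp (-(P ω * z)) - Real.exp (-(Q ω * z))) / z := by
      filter_upwards [hPQ] with ω hω
      have : Real.exp (-(Q ω * z)) ≤ Real.exp (-(P ω * z)) :=
        Real.exp_le_exp.mpr (by nlinarith [hω.2, hz.le])
      exact div_nonneg (by linarith) hz.le
    have hint : Integrable (fun ω => (Real.exp (-(P ω * z)) - Real.exp (-(Q ω * z))) / z) ℙ := by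
      refine Integrable.mono' (integrable_const (1/z))
        (((((hPm.mul_const z).neg).exp.sub (((hQm.mul_const z).neg).exp)).div_const
          z).aestronglyMeasurable) ?_
      filter_upwards [hPQ] with ω hω
      have he2 : Real.exp (-(Q ω * z)) ≤ Real.exp (-(P ω * z)) :=
        Real.exp_le_exp.mpr (by nlinarith [hω.2, hz.le])
      have he1 : Real.exp (-(P ω * z)) ≤ 1 := by
        rw [Real.exp_le_one_iff]
        nlinarith [hω.1, hz.le]
      have he3 : 0 < Real.exp (-(Q ω * z)) := Real.exp_pos _
      rw [Real.norm_eq_abs, abs_of_nonneg (div_nonneg (by linarith) hz.le),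
        div_le_div_iff_of_pos_right hz]
      linarith
    rw [← ofReal_integral_eq_lintegral_ofReal hint hnn, hB]
  -- assemble
  have hL1 : (∫⁻ ω, ENNReal.ofReal (Real.log (Q ω / P ω)))
      = ∫⁻ ω, ∫⁻ z in Ioi (0:ℝ),
          ENNReal.ofReal ((Real.exp (-(P ω * z)) - Real.exp (-(Q ω * z))) / z) := by
    refine lintegral_congr_ae ?_
    filter_upwards [hPQ] with ω hω
    rw [frullani_lintegral hω.1 hω.2]
  have hswap : (∫⁻ ω, ∫⁻ z in Ioi (0:ℝ),
        ENNReal.ofReal ((Real.exp (-(P ω * z)) - Real.exp (-(Q ω * z))) / z))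
      = ∫⁻ z in Ioi (0:ℝ), ∫⁻ ω,
          ENNReal.ofReal ((Real.exp (-(P ω * z)) - Real.exp (-(Q ω * z))) / z) :=
    lintegral_lintegral_swap hkermeas.aemeasurable
  have hL3 : (∫⁻ z in Ioi (0:ℝ), ∫⁻ ω,
        ENNReal.ofReal ((Real.exp (-(P ω * z)) - Real.exp (-(Q ω * z))) / z))
      = ∫⁻ z in Ioi (0:ℝ), ENNReal.ofReal (T z) :=
    setLIntegral_congr_fun_ae measurableSet_Ioi (ae_of_all _ fun z hz => keyz z hz)
  have hTmeas : Measurable T := by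
    rw [hTdef]
    apply Measurable.mul
    · exact (measurable_id.neg.div_const snr).exp.div measurable_id
    · apply Measurable.mul
      · exact measurable_const.sub
          ((measurable_const.add ((measurable_id.mul_const _).div_const _)).pow_const _)
      · exact Finset.measurable_prod _ fun l _ =>
          (measurable_const.add (measurable_id.mul_const _)).pow_const _
  have hTnn : ∀ z ∈ Ioi (0:ℝ), 0 ≤ T z := by
    intro z hz
    have hz' : (0:ℝ) < z := hz
    rw [hTdef]; dsimp only
    have h1 : (1 + z * d k k ^ (-β k k) / m) ^ (-(m:ℝ)) ≤ 1 := by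
      apply Real.rpow_le_one_of_one_le_of_nonpos
      · have hm' : (0:ℝ) < m := Nat.cast_pos.mpr hm
        have h6 : 0 ≤ z * d k k ^ (-β k k) / m :=
          div_nonneg (mul_nonneg hz'.le (hcpos k).le) hm'.le
        linarith
      · simp
    have h2 : (0:ℝ) ≤ ∏ l ∈ univ.erase k, (1 + z * d k l ^ (-β k l)) ^ (-a l) :=
      Finset.prod_nonneg fun l _ => Real.rpow_nonneg (by nlinarith [(hcpos l).le]) _
    have h3 : (0:ℝ) ≤ Real.exp (-z/snr) / z := div_nonneg (Real.exp_pos _).le hz'.le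
    exact mul_nonneg h3 (mul_nonneg (by linarith) h2)
  have hRHS : ∫ z in Ioi (0:ℝ), T z = (∫⁻ z in Ioi (0:ℝ), ENNReal.ofReal (T z)).toReal := by
    rw [integral_eq_lintegral_of_nonneg_ae
      ((ae_restrict_iff' measurableSet_Ioi).mpr (ae_of_all _ hTnn))
      hTmeas.aestronglyMeasurable.restrict]
  have hLHS1 : (∫ ω, Real.logb 2 (1 + G ω * d k k ^ (-β k k) * 1 /
        (∑ l ∈ univ.erase k, E l ω * d k l ^ (-β k l) * a l + 1 / snr)))
      = (∫ ω, Real.log (Q ω / P ω)) / Real.log 2 := by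
    simp_rw [Real.logb]
    rw [integral_div]
    congr 1
    refine integral_congr_ae ?_
    filter_upwards [hPQ] with ω hω
    congr 1
    have hden : (∑ l ∈ univ.erase k, E l ω * d k l ^ (-β k l) * a l + 1/snr) = P ω := by
      rw [hPdef]; dsimp only
      rw [add_comm]
      congr 1
      exact Finset.sum_congr rfl fun l _ => by ring
    rw [hden, hQdef]
    dsimp only
    have hP0 : P ω ≠ 0 := ne_of_gt hω.1
    field_simp
  have hLHS2 : ∫ ω, Real.log (Q ω / P ω)
      = (∫⁻ ω, ENNReal.ofReal (Real.log (Q ω / P ω))).toReal := by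
    rw [integral_eq_lintegral_of_nonneg_ae]
    · filter_upwards [hPQ] with ω hω
      exact Real.log_nonneg ((one_le_div hω.1).mpr hω.2)
    · exact (Real.measurable_log.comp (hQm.div hPm)).aestronglyMeasurable
  rw [hLHS1, hLHS2, hL1, hswap, hL3, hRHS, Real.logb, Real.log_exp]
  ring
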